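/- Approximation identity for the Ostrowski expansion: for irrational x ∈ (0,1), y ∈ [0,1), digits (a_i,b_i) from the Ostrowski map, and M_n = ∑_{i=1}^n b_i (−1)^{i−1} q_{i−1}, one has y − ∑_{i=1}^n b_i|θ_{i−1}| = y_n |θ_{n−1}|, where (x_n,y_n) = S^n(x,y); in particular 0 ≤ y − ∑_{i=1}^n b_i|θ_{i−1}| < 1/q_n. -/

import Mathlib

open scoped BigOperators

/-- The Gauss map `x ↦ {1/x}` (with `T 0 = 0`). -/
noncomputable def gauss (x : ℝ) : ℝ := Int.fract (1 / x)

/-- `cf x n = (p_{n-1}, q_{n-1})`, the continued fraction convergents of `x`,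
with `p_{-1} = 1, q_{-1} = 0, p_0 = 0, q_0 = 1`,
`p_{k+1} = a_{k+1} p_k + p_{k-1}`, `q_{k+1} = a_{k+1} q_k + q_{k-1}`,
where `a_{k+1} = ⌊1 / T^k x⌋`. -/
noncomputable def cf (x : ℝ) : ℕ → ℤ × ℤ
  | 0 => (1, 0)
  | 1 => (0, 1)
  | n + 2 => (⌊1 / gauss^[n] x⌋ * (cf x (n + 1)).1 + (cf x n).1,
              ⌊1 / gauss^[n] x⌋ * (cf x (n + 1)).2 + (cf x n).2)

/-- `pcf x n = p_{n-1}`. -/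
noncomputable def pcf (x : ℝ) (n : ℕ) : ℤ := (cf x n).1

/-- `qcf x n = q_{n-1}`. -/
noncomputable def qcf (x : ℝ) (n : ℕ) : ℤ := (cf x n).2

/-- `acf x i = a_i = ⌊1 / T^{i-1} x⌋`, the `i`-th partial quotient (for `i ≥ 1`). -/
noncomputable def acf (x : ℝ) (i : ℕ) : ℤ := ⌊1 / gauss^[i - 1] x⌋

/-- `absθ x n = |θ_{n-1}| = |q_{n-1} x - p_{n-1}|` (so `absθ x 0 = 1`, `absθ x 1 = |x|`). -/
noncomputable def absθ (x : ℝ) (n : ℕ) : ℝ := |(qcf x n : ℝ) * x - (pcf x n : ℝ)|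

/-- The Ostrowski map `S(x,y) = ({1/x}, {y/x})`, with `S(0,y) = (0,0)`. -/
noncomputable def ost (p : ℝ × ℝ) : ℝ × ℝ :=
  if p.1 = 0 then (0, 0) else (Int.fract (1 / p.1), Int.fract (p.2 / p.1))

/-- `adig x y n = a_{n+1} = ⌊1 / x_n⌋` where `(x_n, y_n) = S^n (x,y)`. -/
noncomputable def adig (x y : ℝ) (n : ℕ) : ℤ := ⌊1 / (ost^[n] (x, y)).1⌋

/-- `bdig x y n = b_{n+1} = ⌊y_n / x_n⌋` where `(x_n, y_n) = S^n (x,y)`. -/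
noncomputable def bdig (x y : ℝ) (n : ℕ) : ℤ := ⌊(ost^[n] (x, y)).2 / (ost^[n] (x, y)).1⌋

private lemma gauss_step {x : ℝ} (h : Irrational x) (h0 : 0 < x) (h1 : x < 1) :
    Irrational (gauss x) ∧ 0 < gauss x ∧ gauss x < 1 := by
  have hinv : Irrational (1 / x) := by rw [one_div]; exact h.inv
  have hirr : Irrational (gauss x) := by
    unfold gauss
    rw [Int.fract]
    exact hinv.sub_intCast _
  exact ⟨hirr, lt_of_le_of_ne (Int.fract_nonneg _) (Ne.symm hirr.ne_zero),
    Int.fract_lt_one _⟩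

private lemma gauss_iter {x : ℝ} (hirr : Irrational x) (hx0 : 0 < x) (hx1 : x < 1) (n : ℕ) :
    Irrational (gauss^[n] x) ∧ 0 < gauss^[n] x ∧ gauss^[n] x < 1 := by
  induction n with
  | zero => exact ⟨hirr, hx0, hx1⟩
  | succ n ih =>
    rw [Function.iterate_succ_apply']
    exact gauss_step ih.1 ih.2.1 ih.2.2

private lemma orbit_facts (x y : ℝ) (hirr : Irrational x) (hx0 : 0 < x) (hx1 : x < 1)
    (hy0 : 0 ≤ y) (hy1 : y < 1) : ∀ n : ℕ,
    (ost^[n] (x, y)).1 = gauss^[n] x ∧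
    0 ≤ (ost^[n] (x, y)).2 ∧ (ost^[n] (x, y)).2 < 1 := by
  intro n
  induction n with
  | zero => exact ⟨rfl, hy0, hy1⟩
  | succ n ih =>
    obtain ⟨h1, h5, h6⟩ := ih
    obtain ⟨hg1, hg2, hg3⟩ := gauss_iter hirr hx0 hx1 n
    have hne : (ost^[n] (x, y)).1 ≠ 0 := by rw [h1]; exact hg2.ne'
    have key : ost^[n+1] (x, y)
        = (gauss (gauss^[n] x), Int.fract ((ost^[n] (x, y)).2 / gauss^[n] x)) := by
      rw [Function.iterate_succ_apply', ost, if_neg hne, h1]; rfl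
    rw [Function.iterate_succ_apply' gauss]
    exact ⟨by rw [key], by rw [key]; exact Int.fract_nonneg _,
      by rw [key]; exact Int.fract_lt_one _⟩

private noncomputable def Dcf (x : ℝ) (n : ℕ) : ℝ := (qcf x n : ℝ) * x - (pcf x n : ℝ)

private lemma Dcf_zero (x : ℝ) : Dcf x 0 = -1 := by simp [Dcf, qcf, pcf, cf]

private lemma Dcf_one (x : ℝ) : Dcf x 1 = x := by simp [Dcf, qcf, pcf, cf]

private lemma Dcf_rec (x : ℝ) (n : ℕ) :
    Dcf x (n + 2) = (⌊1 / gauss^[n] x⌋ : ℝ) * Dcf x (n + 1) + Dcf x n := by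
  simp only [Dcf, qcf, pcf, cf]
  push_cast
  ring

private lemma qcf_rec (x : ℝ) (n : ℕ) :
    qcf x (n + 2) = ⌊1 / gauss^[n] x⌋ * qcf x (n + 1) + qcf x n := rfl

private lemma Dcf_succ {x : ℝ} (hirr : Irrational x) (hx0 : 0 < x) (hx1 : x < 1) (n : ℕ) :
    Dcf x (n + 1) = -(gauss^[n] x) * Dcf x n := by
  induction n with
  | zero => simp [Dcf_zero, Dcf_one]
  | succ n ih =>
    obtain ⟨hg1, hg2, hg3⟩ := gauss_iter hirr hx0 hx1 n
    have hgne : gauss^[n] x ≠ 0 := hg2.ne'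
    have h2 : gauss^[n+1] x = 1 / gauss^[n] x - (⌊1 / gauss^[n] x⌋ : ℝ) := by
      rw [Function.iterate_succ_apply', gauss, Int.fract]
    rw [Dcf_rec, h2, ih]
    field_simp
    ring

private lemma qD (x : ℝ) (n : ℕ) :
    (qcf x (n + 1) : ℝ) * Dcf x n - (qcf x n : ℝ) * Dcf x (n + 1) = (-1 : ℝ) ^ (n + 1) := by
  induction n with
  | zero => simp [Dcf_zero, Dcf_one, qcf, cf]
  | succ n ih =>
    have hq : ((qcf x (n + 2) : ℤ) : ℝ)
        = (⌊1 / gauss^[n] x⌋ : ℝ) * (qcf x (n + 1) : ℝ) + (qcf x n : ℝ) := by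
      rw [qcf_rec]; push_cast; ring
    rw [hq, Dcf_rec, pow_succ (-1 : ℝ) (n + 1)]
    linear_combination (-1 : ℝ) * ih

private lemma acf_ge_one {x : ℝ} (hirr : Irrational x) (hx0 : 0 < x) (hx1 : x < 1) (n : ℕ) :
    1 ≤ ⌊1 / gauss^[n] x⌋ := by
  obtain ⟨hg1, hg2, hg3⟩ := gauss_iter hirr hx0 hx1 n
  refine Int.le_floor.mpr ?_
  rw [Int.cast_one, le_div_iff₀ hg2]
  linarith

private lemma qcf_pos {x : ℝ} (hirr : Irrational x) (hx0 : 0 < x) (hx1 : x < 1) (n : ℕ) :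
    0 ≤ qcf x n ∧ 1 ≤ qcf x (n + 1) := by
  induction n with
  | zero => exact ⟨le_refl 0, le_refl 1⟩
  | succ n ih =>
    obtain ⟨h0, h1⟩ := ih
    refine ⟨le_trans zero_le_one h1, ?_⟩
    rw [qcf_rec]
    have ha := acf_ge_one hirr hx0 hx1 n
    nlinarith

private lemma absθ_eq (x : ℝ) (n : ℕ) : absθ x n = |Dcf x n| := rfl

private lemma absθ_succ {x : ℝ} (hirr : Irrational x) (hx0 : 0 < x) (hx1 : x < 1) (n : ℕ) :
    absθ x (n + 1) = gauss^[n] x * absθ x n := by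
  obtain ⟨hg1, hg2, hg3⟩ := gauss_iter hirr hx0 hx1 n
  rw [absθ_eq, absθ_eq, Dcf_succ hirr hx0 hx1 n, abs_mul, abs_neg, abs_of_pos hg2]

private lemma key_bound {x : ℝ} (hirr : Irrational x) (hx0 : 0 < x) (hx1 : x < 1) (n : ℕ) :
    0 < absθ x n ∧ (qcf x (n + 1) : ℝ) * absθ x n ≤ 1 := by
  obtain ⟨hg1, hg2, hg3⟩ := gauss_iter hirr hx0 hx1 n
  obtain ⟨hq0, hq1⟩ := qcf_pos hirr hx0 hx1 n
  have hq0' : (0 : ℝ) ≤ (qcf x n : ℝ) := by exact_mod_cast hq0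
  have hq1' : (1 : ℝ) ≤ (qcf x (n + 1) : ℝ) := by exact_mod_cast hq1
  have hcomb : ((qcf x (n + 1) : ℝ) + gauss^[n] x * (qcf x n : ℝ)) * Dcf x n
      = (-1 : ℝ) ^ (n + 1) := by
    rw [← qD x n, Dcf_succ hirr hx0 hx1 n]; ring
  have hcpos : 0 < (qcf x (n + 1) : ℝ) + gauss^[n] x * (qcf x n : ℝ) := by positivity
  have habs : ((qcf x (n + 1) : ℝ) + gauss^[n] x * (qcf x n : ℝ)) * |Dcf x n| = 1 := by
    have h := congrArg abs hcomb
    rwa [abs_mul, abs_pow, abs_neg, abs_one, one_pow, abs_of_pos hcpos] at h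
  have hDpos : 0 < |Dcf x n| := by
    rcases lt_or_eq_of_le (abs_nonneg (Dcf x n)) with h | h
    · exact h
    · rw [← h, mul_zero] at habs; norm_num at habs
  rw [absθ_eq]
  constructor
  · exact hDpos
  · nlinarith [mul_nonneg (mul_nonneg hg2.le hq0') hDpos.le]

/-- approximation identity for the Ostrowski expansion:
`y - ∑_{i=1}^n b_i |θ_{i-1}| = y_n |θ_{n-1}|`, and in particular this quantity
lies in `[0, 1/q_n)`. -/
theorem ostrowski_approximation (x y : ℝ) (hirr : Irrational x)
    (hx0 : 0 < x) (hx1 : x < 1) (hy0 : 0 ≤ y) (hy1 : y < 1) (n : ℕ) :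
    y - (∑ i ∈ Finset.range n, (bdig x y i : ℝ) * absθ x (i + 1))
        = (ost^[n] (x, y)).2 * absθ x n ∧
      0 ≤ y - (∑ i ∈ Finset.range n, (bdig x y i : ℝ) * absθ x (i + 1)) ∧
      y - (∑ i ∈ Finset.range n, (bdig x y i : ℝ) * absθ x (i + 1))
        < 1 / (qcf x (n + 1) : ℝ) := by
  have horb := orbit_facts x y hirr hx0 hx1 hy0 hy1
  have hId : ∀ m : ℕ, y - (∑ i ∈ Finset.range m, (bdig x y i : ℝ) * absθ x (i + 1))
      = (ost^[m] (x, y)).2 * absθ x m := by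
    intro m
    induction m with
    | zero =>
      have h0 : absθ x 0 = 1 := by simp [absθ, qcf, pcf, cf]
      simp [h0]
    | succ m ih =>
      obtain ⟨hx_eq, hyn0, hyn1⟩ := horb m
      obtain ⟨hg1, hg2, hg3⟩ := gauss_iter hirr hx0 hx1 m
      have hne : (ost^[m] (x, y)).1 ≠ 0 := by rw [hx_eq]; exact hg2.ne'
      have hb : (bdig x y m : ℝ) = ⌊(ost^[m] (x, y)).2 / gauss^[m] x⌋ := by
        rw [bdig, hx_eq]
      have hy' : (ost^[m+1] (x, y)).2
          = (ost^[m] (x, y)).2 / gauss^[m] x - (⌊(ost^[m] (x, y)).2 / gauss^[m] x⌋ : ℝ) := by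
        rw [Function.iterate_succ_apply', ost, if_neg hne, hx_eq]
        show Int.fract ((ost^[m] (x, y)).2 / gauss^[m] x) = _
        rw [Int.fract]
      rw [Finset.sum_range_succ, ← sub_sub, ih, hy', absθ_succ hirr hx0 hx1 m, hb]
      field_simp
  refine ⟨hId n, ?_, ?_⟩
  · rw [hId n]
    obtain ⟨hx_eq, hyn0, hyn1⟩ := horb n
    exact mul_nonneg hyn0 (abs_nonneg _)
  · rw [hId n]
    obtain ⟨hx_eq, hyn0, hyn1⟩ := horb n
    obtain ⟨hθpos, hθle⟩ := key_bound hirr hx0 hx1 n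
    obtain ⟨hq0, hq1⟩ := qcf_pos hirr hx0 hx1 n
    have hq1' : (1 : ℝ) ≤ (qcf x (n + 1) : ℝ) := by exact_mod_cast hq1
    have hqpos : (0 : ℝ) < (qcf x (n + 1) : ℝ) := by linarith
    rw [lt_div_iff₀ hqpos]
    nlinarith [mul_nonneg hyn0 hθpos.le]
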